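/- Fix an edge set indexed by [N], a vector w* ∈ [0,1]^N, a scalar W > 0, a scalar b ≥ 0, and n ≥ 2. Define U^b(p) = n^{2η(p)}·((b - ⟨w*, p⟩)/W)² where η(p) = ⟨w* restricted-support, (1-p)⟩/W is affine in p (more precisely η(p) = (Σ_i w*_i(1 - p_i))/W). Then U^b is convex on the convex set K_b = {p ∈ [0,1]^N : Σ_i p_i ≤ b}. -/

import Mathlib

open Real Set

/-- One-dimensional convexity lemma: `s ↦ exp (c (S - s)) ((b - s)/W)²` is convex on `Iic b`. -/
lemma phi_convexOn (c W b S : ℝ) (hc : 0 < c) (hW : 0 < W) :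
    ConvexOn ℝ (Set.Iic b) (fun s => Real.exp (c * (S - s)) * ((b - s) / W) ^ 2) := by
  set f : ℝ → ℝ := fun s => Real.exp (c * (S - s)) * ((b - s) / W) ^ 2 with hf
  set f' : ℝ → ℝ := fun s =>
    Real.exp (c * (S - s)) * (-c * ((b - s) / W) ^ 2 - 2 * (b - s) / W ^ 2) with hf'
  set f'' : ℝ → ℝ := fun s =>
    Real.exp (c * (S - s)) *
      (c ^ 2 * ((b - s) / W) ^ 2 + 4 * c * (b - s) / W ^ 2 + 2 / W ^ 2) with hf''
  have hE : ∀ s : ℝ, HasDerivAt (fun s => Real.exp (c * (S - s)))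
      (Real.exp (c * (S - s)) * (-c)) s := by
    intro s
    have h1 : HasDerivAt (fun s : ℝ => c * (S - s)) (-c) s := by
      simpa using ((hasDerivAt_id s).const_sub S).const_mul c
    simpa using h1.exp
  have hD1 : ∀ s : ℝ, HasDerivAt f (f' s) s := by
    intro s
    have hq : HasDerivAt (fun s : ℝ => ((b - s) / W) ^ 2)
        (2 * ((b - s) / W) * (-1 / W)) s := by
      have := (((hasDerivAt_id s).const_sub b).div_const W).pow 2
      exact this.congr_deriv (by norm_num)
    have := (hE s).mul hq
    exact this.congr_deriv (by simp only [hf']; ring)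
  have hD2 : ∀ s : ℝ, HasDerivAt f' (f'' s) s := by
    intro s
    have hP : HasDerivAt (fun s : ℝ => -c * ((b - s) / W) ^ 2 - 2 * (b - s) / W ^ 2)
        (-c * (2 * ((b - s) / W) * (-1 / W)) - (-2) / W ^ 2) s := by
      have h1 : HasDerivAt (fun s : ℝ => -c * ((b - s) / W) ^ 2)
          (-c * (2 * ((b - s) / W) * (-1 / W))) s := by
        have := ((((hasDerivAt_id s).const_sub b).div_const W).pow 2).const_mul (-c)
        exact this.congr_deriv (by norm_num)
      have h2 : HasDerivAt (fun s : ℝ => 2 * (b - s) / W ^ 2)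
          ((-2) / W ^ 2) s := by
        have := (((hasDerivAt_id s).const_sub b).const_mul 2).div_const (W ^ 2)
        exact this.congr_deriv (by norm_num)
      exact h1.sub h2
    have := (hE s).mul hP
    exact this.congr_deriv (by simp only [hf'']; ring)
  refine convexOn_of_hasDerivWithinAt2_nonneg (f' := f') (f'' := f'') (convex_Iic b) ?_ ?_ ?_ ?_
  · exact (Continuous.mul (by fun_prop) (by fun_prop)).continuousOn
  · exact fun x _ => (hD1 x).hasDerivWithinAt
  · exact fun x _ => (hD2 x).hasDerivWithinAt
  · intro x hx
    rw [interior_Iic] at hx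
    have hbx : 0 ≤ b - x := by linarith [hx.out]
    have hW2 : 0 < W ^ 2 := by positivity
    have : 0 ≤ c ^ 2 * ((b - x) / W) ^ 2 + 4 * c * (b - x) / W ^ 2 + 2 / W ^ 2 := by
      positivity
    exact mul_nonneg (Real.exp_pos _).le this

/-- the surrogate objective `U^b` is convex on `K_b`. -/
theorem stmt_15 (N : ℕ) (wstar : Fin N → ℝ)
    (hw0 : ∀ i, 0 ≤ wstar i) (hw1 : ∀ i, wstar i ≤ 1)
    (W : ℝ) (hW : 0 < W) (b : ℝ) (hb : 0 ≤ b) (n : ℕ) (hn : 2 ≤ n) :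
    ConvexOn ℝ
      {p : Fin N → ℝ | (∀ i, 0 ≤ p i ∧ p i ≤ 1) ∧ (∑ i, p i) ≤ b}
      (fun p : Fin N → ℝ =>
        (n : ℝ) ^ (2 * ((∑ i, wstar i * (1 - p i)) / W)) *
          ((b - ∑ i, wstar i * p i) / W) ^ 2) := by
  have hn0 : (0 : ℝ) < n := by positivity
  have hlog : 0 < Real.log n := Real.log_pos (by exact_mod_cast by omega : (1:ℝ) < n)
  set c : ℝ := 2 * Real.log n / W with hc_def
  have hc : 0 < c := by positivity
  set S : ℝ := ∑ i, wstar i with hS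
  set L : (Fin N → ℝ) → ℝ := fun p => ∑ i, wstar i * p i with hL
  -- rewrite the function as φ ∘ L
  have hfun : (fun p : Fin N → ℝ =>
        (n : ℝ) ^ (2 * ((∑ i, wstar i * (1 - p i)) / W)) *
          ((b - ∑ i, wstar i * p i) / W) ^ 2)
      = fun p => Real.exp (c * (S - L p)) * ((b - L p) / W) ^ 2 := by
    funext p
    rw [Real.rpow_def_of_pos hn0]
    congr 1
    congr 1
    have hsum : ∑ i, wstar i * (1 - p i) = S - L p := by
      simp [hS, hL, mul_sub, Finset.sum_sub_distrib]
    rw [hsum, hc_def]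
    field_simp
  rw [hfun]
  have hφ := phi_convexOn c W b S hc hW
  -- K_b is convex
  have hK : Convex ℝ {p : Fin N → ℝ | (∀ i, 0 ≤ p i ∧ p i ≤ 1) ∧ (∑ i, p i) ≤ b} := by
    intro p hp q hq a a' ha ha' hab
    constructor
    · intro i
      have h1 := (hp.1 i); have h2 := (hq.1 i)
      constructor
      · have : (0:ℝ) ≤ a * p i + a' * q i := by nlinarith [h1.1, h2.1]
        simpa [smul_eq_mul] using this
      · have : a * p i + a' * q i ≤ 1 := by nlinarith [h1.2, h2.2]
        simpa [smul_eq_mul] using this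
    · have hsum : ∑ i, (a • p + a' • q) i = a * ∑ i, p i + a' * ∑ i, q i := by
        simp [Finset.sum_add_distrib, Finset.mul_sum]
      rw [Set.mem_setOf_eq] at hp hq
      calc ∑ i, (a • p + a' • q) i = a * ∑ i, p i + a' * ∑ i, q i := hsum
        _ ≤ a * b + a' * b := by gcongr <;> [exact hp.2; exact hq.2]
        _ = b := by rw [← add_mul, hab, one_mul]
  -- L maps K_b into Iic b
  have hLmem : ∀ p : Fin N → ℝ, p ∈ {p : Fin N → ℝ | (∀ i, 0 ≤ p i ∧ p i ≤ 1) ∧ (∑ i, p i) ≤ b}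
      → L p ≤ b := by
    intro p hp
    have h1 : L p ≤ ∑ i, p i := by
      apply Finset.sum_le_sum
      intro i _
      nlinarith [(hp.1 i).1, hw0 i, hw1 i]
    exact h1.trans hp.2
  refine ⟨hK, ?_⟩
  intro p hp q hq a a' ha ha' hab
  have hLlin : L (a • p + a' • q) = a * L p + a' * L q := by
    simp [hL, Finset.mul_sum, ← Finset.sum_add_distrib, mul_add]
    congr 1; funext i; ring_nf
  have := hφ.2 (mem_Iic.mpr (hLmem p hp)) (mem_Iic.mpr (hLmem q hq)) ha ha' hab
  simpa [hLlin, smul_eq_mul] using this
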